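/- (Lemma 4 of the paper.) In the closed-loop coordinated system, the mean-field process is a controlled Markov chain with control Γ_t whose transition kernel does not depend on the strategy: for every coordination strategy ψ, every time t, every mean-field history z_{1:t} with positive probability, every count vector z' with ∑_a z'(a) = n, and any fixed representative x0 ∈ H(z_t), P(Z_{t+1} = z' | Z_{1:t} = z_{1:t}) equals the probability, under w : Fin n → 𝒲 with i.i.d. coordinates of PMF P_{W_t}, of the event {w : emp(i ↦ f_t(x0 i, γ_t(x0 i), w i, z_t)) = z'}, where γ_t = ψ_t(z_{1:t}). This quantity depends only on (z_t, γ_t) and not on z_{1:t-1}, on the choice of x0 ∈ H(z_t), or on ψ. -/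

import Mathlib

open scoped ENNReal

def emp {X : Type*} [DecidableEq X] {n : ℕ} (x : Fin n → X) : X → ℕ :=
  fun a => (Finset.univ.filter (fun i => x i = a)).card

def Hset {X : Type*} [Fintype X] [DecidableEq X] (n : ℕ) (m : X → ℕ) : Finset (Fin n → X) :=
  Finset.univ.filter (fun x => emp x = m)

noncomputable def iid {W : Type*} [Fintype W] (n : ℕ) (ν : PMF W) : PMF (Fin n → W) :=
  PMF.ofFintype (fun w => ∏ i, ν (w i)) (by
    have h : ∑ j : W, ν j = 1 := by
      first
        | rw [← ν.tsum_coe, tsum_fintype]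
        | simpa [tsum_fintype] using ν.tsum_coe
    rw [← Fintype.prod_sum]; simp [h])

variable {X U W : Type*} [Fintype X] [DecidableEq X] [Fintype U] [Fintype W]

/-- The closed-loop law of the state trajectory `(X_0, …, X_t)` in the coordinated system:
initial states i.i.d. `PX`; the coordinator applies the prescription `ψ t z_{0:t} : X → U`
to each local state; local dynamics `f` driven by i.i.d. noises `PW t`. -/
noncomputable def hist (n : ℕ) (PX : PMF X) (PW : ℕ → PMF W)
    (f : ℕ → X → U → W → (X → ℕ) → X)
    (ψ : (t : ℕ) → (Fin (t + 1) → (X → ℕ)) → X → U) :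
    (t : ℕ) → PMF (Fin (t + 1) → (Fin n → X))
  | 0 => (iid n PX).map (fun x _ => x)
  | t + 1 =>
    (hist n PX PW f ψ t).bind (fun xs =>
      (iid n (PW t)).map (fun w =>
        Fin.snoc xs (fun i =>
          f t (xs (Fin.last t) i)
            (ψ t (fun s => emp (xs s)) (xs (Fin.last t) i))
            (w i) (emp (xs (Fin.last t))))))

lemma emp_comp_perm {X : Type*} [DecidableEq X] {n : ℕ} (g : Fin n → X) (σ : Equiv.Perm (Fin n)) :
    emp (fun i => g (σ i)) = emp g := by
  funext a
  unfold emp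
  apply Finset.card_bij' (fun i _ => σ i) (fun i _ => σ.symm i) <;> simp

lemma exists_perm_of_emp_eq' {X : Type*} [DecidableEq X] {n : ℕ} {x y : Fin n → X}
    (h : emp x = emp y) : ∃ σ : Equiv.Perm (Fin n), ∀ i, y i = x (σ i) := by
  have hc : ∀ a, Fintype.card {i // y i = a} = Fintype.card {i // x i = a} := by
    intro a
    simp only [Fintype.card_subtype]
    have := congrFun h a
    unfold emp at this
    omega
  exact ⟨Equiv.ofFiberEquiv (f := y) (g := x) (fun a => Fintype.equivOfCardEq (hc a)),
    fun i => (Equiv.ofFiberEquiv_map (f := y) (g := x)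
      (fun a => Fintype.equivOfCardEq (hc a)) i).symm⟩

lemma iid_comp_perm {W : Type*} [Fintype W] {n : ℕ} (ν : PMF W) (σ : Equiv.Perm (Fin n))
    (w : Fin n → W) : iid n ν (fun i => w (σ i)) = iid n ν w := by
  simp only [iid, PMF.ofFintype_apply]
  exact Equiv.prod_comp σ (fun i => ν (w i))

lemma sum_iid_reindex {W : Type*} [Fintype W] {n : ℕ} (ν : PMF W) (σ : Equiv.Perm (Fin n))
    (q : (Fin n → W) → Prop) [DecidablePred q] :
    ∑ w ∈ Finset.univ.filter q, iid n ν w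
      = ∑ w ∈ Finset.univ.filter (fun w => q (fun i => w (σ i))), iid n ν w := by
  rw [Finset.sum_filter, Finset.sum_filter]
  have h1 : ∀ w : Fin n → W,
      (if q (fun i => w (σ i)) then iid n ν w else 0)
        = (fun v => if q v then iid n ν v else 0) (fun i => w (σ i)) := by
    intro w
    by_cases h : q (fun i => w (σ i)) <;> simp [h, iid_comp_perm ν σ w]
  rw [Finset.sum_congr rfl (fun w _ => h1 w)]
  exact (Equiv.sum_comp
    (⟨fun w i => w (σ i), fun w i => w (σ.symm i),
      fun w => by funext i; simp, fun w => by funext i; simp⟩ : (Fin n → W) ≃ (Fin n → W))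
    (fun v => if q v then iid n ν v else 0)).symm

lemma hist_expand (n : ℕ) (PX : PMF X) (PW : ℕ → PMF W)
    (f : ℕ → X → U → W → (X → ℕ) → X)
    (ψ : (t : ℕ) → (Fin (t + 1) → (X → ℕ)) → X → U) (t : ℕ)
    (Q : (Fin (t + 2) → (Fin n → X)) → Prop) [DecidablePred Q] :
    ∑ xs ∈ Finset.univ.filter Q, hist n PX PW f ψ (t + 1) xs
      = ∑ xs' : Fin (t + 1) → (Fin n → X), hist n PX PW f ψ t xs' *
          ∑ w ∈ Finset.univ.filter (fun w : Fin n → W =>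
            Q (Fin.snoc xs' (fun i =>
              f t (xs' (Fin.last t) i)
                (ψ t (fun s => emp (xs' s)) (xs' (Fin.last t) i))
                (w i) (emp (xs' (Fin.last t)))))),
            iid n (PW t) w := by
  have hexp : ∀ xs, hist n PX PW f ψ (t + 1) xs
      = ∑ xs' : Fin (t + 1) → (Fin n → X), hist n PX PW f ψ t xs' *
          ∑ w : Fin n → W, (if xs = Fin.snoc xs' (fun i =>
              f t (xs' (Fin.last t) i)
                (ψ t (fun s => emp (xs' s)) (xs' (Fin.last t) i))
                (w i) (emp (xs' (Fin.last t)))) then iid n (PW t) w else 0) := by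
    intro xs
    show (PMF.bind _ _) xs = _
    rw [PMF.bind_apply, tsum_fintype]
    apply Finset.sum_congr rfl (fun xs' _ => ?_)
    rw [PMF.map_apply, tsum_fintype]
    congr 1
    apply Finset.sum_congr rfl (fun w _ => ?_)
    congr 1
  rw [Finset.sum_congr rfl (fun xs _ => hexp xs)]
  rw [Finset.sum_comm]
  refine Finset.sum_congr rfl (fun xs' _ => ?_)
  rw [← Finset.mul_sum]
  congr 1
  rw [Finset.sum_comm]
  rw [Finset.sum_filter]
  refine Finset.sum_congr rfl (fun w _ => ?_)
  rw [Finset.sum_ite_eq' (Finset.univ.filter Q)]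
  simp [Finset.mem_filter]

/-- Lemma 4: the mean field is a controlled Markov chain with control `Γ_t = ψ t z`:
for any positive-probability mean-field history `z_{0:t}`, any next mean field `z'` and any
representative `x0 ∈ H(z_t)`, `P(Z_{t+1} = z' | Z_{0:t} = z)` equals the i.i.d.-noise
probability that `emp (i ↦ f_t(x0 i, γ_t(x0 i), w i, z_t)) = z'`; hence it depends only on
`(z_t, γ_t)` and not on the earlier history, the representative `x0`, or the strategy. -/
theorem stmt6 (n : ℕ) (hn : 1 ≤ n) (PX : PMF X) (PW : ℕ → PMF W)
    (f : ℕ → X → U → W → (X → ℕ) → X)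
    (ψ : (t : ℕ) → (Fin (t + 1) → (X → ℕ)) → X → U)
    (t : ℕ) (z : Fin (t + 1) → (X → ℕ)) (z' : X → ℕ) (hz' : ∑ a, z' a = n)
    (hz : 0 < ∑ xs ∈ Finset.univ.filter
        (fun xs : Fin (t + 2) → (Fin n → X) => ∀ s : Fin (t + 1), emp (xs s.castSucc) = z s),
        hist n PX PW f ψ (t + 1) xs)
    (x0 : Fin n → X) (hx0 : x0 ∈ Hset n (z (Fin.last t))) :
    (∑ xs ∈ Finset.univ.filter
        (fun xs : Fin (t + 2) → (Fin n → X) =>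
          (∀ s : Fin (t + 1), emp (xs s.castSucc) = z s) ∧
            emp (xs (Fin.last (t + 1))) = z'),
        hist n PX PW f ψ (t + 1) xs)
      / (∑ xs ∈ Finset.univ.filter
          (fun xs : Fin (t + 2) → (Fin n → X) =>
            ∀ s : Fin (t + 1), emp (xs s.castSucc) = z s),
          hist n PX PW f ψ (t + 1) xs)
    = ∑ w ∈ Finset.univ.filter
        (fun w : Fin n → W =>
          emp (fun i =>
            f t (x0 i) (ψ t z (x0 i)) (w i) (z (Fin.last t))) = z'),
        iid n (PW t) w := by
  classical
  have hx0' : emp x0 = z (Fin.last t) := by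
    simpa [Hset] using hx0
  set C : ℝ≥0∞ := ∑ w ∈ Finset.univ.filter
      (fun w : Fin n → W =>
        emp (fun i => f t (x0 i) (ψ t z (x0 i)) (w i) (z (Fin.last t))) = z'),
      iid n (PW t) w with hCdef
  set D : ℝ≥0∞ := ∑ xs' ∈ Finset.univ.filter
      (fun xs' : Fin (t + 1) → (Fin n → X) => ∀ s, emp (xs' s) = z s),
      hist n PX PW f ψ t xs' with hDdef
  -- Claim 1: invariance of the one-step noise probability
  have key : ∀ xs' : Fin (t + 1) → (Fin n → X), (∀ s, emp (xs' s) = z s) →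
      (∑ w ∈ Finset.univ.filter (fun w : Fin n → W =>
          emp (fun i => f t (xs' (Fin.last t) i)
            (ψ t (fun s => emp (xs' s)) (xs' (Fin.last t) i)) (w i)
            (emp (xs' (Fin.last t)))) = z'), iid n (PW t) w) = C := by
    intro xs' hc
    have hzz : (fun s => emp (xs' s)) = z := funext hc
    have hlast : emp (xs' (Fin.last t)) = z (Fin.last t) := hc _
    obtain ⟨σ, hσ⟩ := exists_perm_of_emp_eq' (hx0'.trans hlast.symm)
    rw [hzz, hlast]
    rw [hCdef, sum_iid_reindex (PW t) σ]
    apply Finset.sum_congr _ (fun _ _ => rfl)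
    apply Finset.filter_congr
    intro w _
    have hfun : (fun i => f t (xs' (Fin.last t) i) (ψ t z (xs' (Fin.last t) i))
          (w (σ i)) (z (Fin.last t)))
        = fun i => (fun j => f t (x0 j) (ψ t z (x0 j)) (w j) (z (Fin.last t))) (σ i) :=
      funext (fun i => by rw [hσ])
    rw [hfun, emp_comp_perm (fun j => f t (x0 j) (ψ t z (x0 j)) (w j) (z (Fin.last t))) σ]
  -- numerator = D * C
  have hnum : (∑ xs ∈ Finset.univ.filter
        (fun xs : Fin (t + 2) → (Fin n → X) =>
          (∀ s : Fin (t + 1), emp (xs s.castSucc) = z s) ∧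
            emp (xs (Fin.last (t + 1))) = z'),
        hist n PX PW f ψ (t + 1) xs) = D * C := by
    rw [hist_expand]
    rw [hDdef, Finset.sum_mul, Finset.sum_filter]
    apply Finset.sum_congr rfl
    intro xs' _
    by_cases hc : ∀ s : Fin (t + 1), emp (xs' s) = z s
    · rw [if_pos hc, ← key xs' hc]
      congr 1
      apply Finset.sum_congr _ (fun _ _ => rfl)
      apply Finset.filter_congr
      intro w _
      simp [Fin.snoc_castSucc, Fin.snoc_last, hc]
    · rw [if_neg hc]
      convert mul_zero _ using 2
      convert Finset.sum_empty
      rw [Finset.filter_eq_empty_iff]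
      intro w _
      simp only [Fin.snoc_castSucc, Fin.snoc_last]
      intro hcontra
      exact hc hcontra.1
  -- denominator = D
  have hden : (∑ xs ∈ Finset.univ.filter
        (fun xs : Fin (t + 2) → (Fin n → X) =>
          ∀ s : Fin (t + 1), emp (xs s.castSucc) = z s),
        hist n PX PW f ψ (t + 1) xs) = D := by
    rw [hist_expand]
    rw [hDdef, Finset.sum_filter]
    apply Finset.sum_congr rfl
    intro xs' _
    by_cases hc : ∀ s : Fin (t + 1), emp (xs' s) = z s
    · rw [if_pos hc]
      have : (Finset.univ.filter (fun w : Fin n → W =>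
          ∀ s : Fin (t + 1), emp ((Fin.snoc xs' (fun i =>
            f t (xs' (Fin.last t) i)
              (ψ t (fun s => emp (xs' s)) (xs' (Fin.last t) i))
              (w i) (emp (xs' (Fin.last t)))) : Fin (t+2) → Fin n → X) s.castSucc) = z s))
          = Finset.univ := by
        rw [Finset.filter_eq_self]
        intro w _
        simpa [Fin.snoc_castSucc] using hc
      rw [this]
      have h1 : ∑ w : Fin n → W, iid n (PW t) w = 1 := by
        rw [← (iid n (PW t)).tsum_coe, tsum_fintype]
      rw [h1, mul_one]
    · rw [if_neg hc]
      convert mul_zero _ using 2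
      convert Finset.sum_empty
      rw [Finset.filter_eq_empty_iff]
      intro w _
      simp only [Fin.snoc_castSucc]
      exact hc
  rw [hnum, hden]
  rw [hden] at hz
  have hD0 : D ≠ 0 := ne_of_gt hz
  have hDtop : D ≠ ⊤ := by
    have hle : D ≤ ∑ xs' : Fin (t + 1) → (Fin n → X), hist n PX PW f ψ t xs' := by
      rw [hDdef]
      exact Finset.sum_le_sum_of_subset (Finset.filter_subset _ _)
    have h1 : ∑ xs' : Fin (t + 1) → (Fin n → X), hist n PX PW f ψ t xs' = 1 := by
      rw [← (hist n PX PW f ψ t).tsum_coe, tsum_fintype]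
    rw [h1] at hle
    exact ne_top_of_le_ne_top ENNReal.one_ne_top hle
  rw [mul_comm D C, div_eq_mul_inv, mul_assoc, ENNReal.mul_inv_cancel hD0 hDtop, mul_one]
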